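/- Let Γ be a connected graph and m > 1 such that every 1-sequence in VΓ is m-triangulable. Then for all vertices u, v, z and every path x_0, ..., x_n in VΓ from u to v, dist(z, {x_0,...,x_n}) ≤ (1/2)(dist(z,u) + dist(z,v) − dist(u,v) + 3m). -/

import Mathlib

def IsMSeq {V : Type*} (G : SimpleGraph V) (m : ℕ) (l : List V) : Prop :=
  l ≠ [] ∧ l.head? = l.getLast? ∧ l.Chain' (fun a b => G.dist a b ≤ m)

inductive MRed {V : Type*} (G : SimpleGraph V) (m : ℕ) : List V → List V → Prop
  | mk (l₁ : List V) (a b c : V) (l₂ : List V) (h : G.dist a c ≤ m) :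
      MRed G m (l₁ ++ a :: b :: c :: l₂) (l₁ ++ a :: c :: l₂)

inductive Triangulable {V : Type*} (G : SimpleGraph V) (m : ℕ) : List V → Prop
  | base (l : List V) (h : l.length ≤ 4) : Triangulable G m l
  | step (l l' : List V) (h : MRed G m l l') (h' : Triangulable G m l') : Triangulable G m l

set_option linter.deprecated false in
theorem List.chain'_append {α : Type*} {R : α → α → Prop} {l₁ l₂ : List α} :
    List.Chain' R (l₁ ++ l₂) ↔ List.Chain' R l₁ ∧ List.Chain' R l₂ ∧
      ∀ x ∈ l₁.getLast?, ∀ y ∈ l₂.head?, R x y :=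
  List.isChain_append

set_option linter.deprecated false in
theorem List.chain'_cons {α : Type*} {R : α → α → Prop} {x y : α} {l : List α} :
    List.Chain' R (x :: y :: l) ↔ R x y ∧ List.Chain' R (y :: l) :=
  List.isChain_cons_cons

private lemma head?_del {α : Type*} (l₁ l₂ : List α) (a b c : α) :
    (l₁ ++ a :: b :: c :: l₂).head? = (l₁ ++ a :: c :: l₂).head? := by
  cases l₁ <;> simp

private lemma getLast?_del {α : Type*} (l₁ l₂ : List α) (a b c : α) :
    (l₁ ++ a :: b :: c :: l₂).getLast? = (l₁ ++ a :: c :: l₂).getLast? := by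
  rw [show l₁ ++ a :: b :: c :: l₂ = (l₁ ++ [a, b]) ++ c :: l₂ by simp,
      show l₁ ++ a :: c :: l₂ = (l₁ ++ [a]) ++ c :: l₂ by simp,
      List.getLast?_append_of_ne_nil _ (by simp), List.getLast?_append_of_ne_nil _ (by simp)]

private lemma chain'_del {α : Type*} {P : α → α → Prop} {l₁ l₂ : List α} {a b c : α}
    (h : List.Chain' P (l₁ ++ a :: b :: c :: l₂)) (hac : P a c) :
    List.Chain' P (l₁ ++ a :: c :: l₂) := by
  rw [List.chain'_append] at h ⊢
  obtain ⟨h1, h2, h3⟩ := h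
  rw [List.chain'_cons, List.chain'_cons] at h2
  refine ⟨h1, ?_, ?_⟩
  · rw [List.chain'_cons]
    exact ⟨hac, h2.2.2⟩
  · intro x hx y hy
    exact h3 x hx y (by simpa using hy)

private lemma chain'_del_facts {α : Type*} {P : α → α → Prop} {l₁ l₂ : List α} {a b c : α}
    (h : List.Chain' P (l₁ ++ a :: b :: c :: l₂)) : P a b ∧ P b c := by
  have h2 := (List.chain'_append.mp h).2.1
  rw [List.chain'_cons, List.chain'_cons] at h2
  exact ⟨h2.1, h2.2.1⟩

/-- Main combinatorial induction: a triangulable closed `m`-chain decomposed as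
`A ++ B ++ C` (left geodesic part / path part / right geodesic part) yields the goal. -/
private lemma main_ind {V : Type*} (G : SimpleGraph V) (m : ℕ)
    (PA PB PC : V → Prop) (goal : Prop) (z : V)
    (htripod : ∀ a b c, PA a → PB b → PC c →
      G.dist a b ≤ m → G.dist b c ≤ m → G.dist a c ≤ m → goal)
    (hnear : ∀ b, PB b → G.dist z b ≤ m → goal) :
    ∀ l : List V, Triangulable G m l →
      ∀ A B C : List V, l = A ++ B ++ C → A ≠ [] → B ≠ [] → C ≠ [] →
      (∀ x ∈ A, PA x) → (∀ x ∈ B, PB x) → (∀ x ∈ C, PC x) →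
      l.head? = some z → l.getLast? = some z →
      l.Chain' (fun x y => G.dist x y ≤ m) → goal := by
  intro l hl
  induction hl with
  | base l hlen =>
    intro A B C heq hA hB hC hPA hPB hPC hhead hlast hchain
    subst heq
    obtain ⟨a1, A1, rfl⟩ := List.exists_cons_of_ne_nil hA
    obtain ⟨b1, B1, rfl⟩ := List.exists_cons_of_ne_nil hB
    obtain ⟨c1, C1, rfl⟩ := List.exists_cons_of_ne_nil hC
    simp only [List.length_append, List.length_cons] at hlen
    -- A1, B1, C1 have total length ≤ 1
    match A1, B1, C1 with
    | [], [], [] =>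
      simp only [List.nil_append, List.cons_append, List.head?_cons] at hhead hlast hchain
      rw [List.chain'_cons, List.chain'_cons] at hchain
      simp only [List.getLast?_cons_cons, List.getLast?_singleton] at hlast
      obtain rfl : a1 = z := by simpa using hhead
      exact hnear b1 (hPB b1 (by simp)) hchain.1
    | [a2], [], [] =>
      simp only [List.nil_append, List.cons_append, List.head?_cons] at hhead hlast hchain
      rw [List.chain'_cons, List.chain'_cons, List.chain'_cons] at hchain
      simp only [List.getLast?_cons_cons, List.getLast?_singleton] at hlast
      obtain rfl : c1 = z := by simpa using hlast
      exact hnear b1 (hPB b1 (by simp)) (by rw [SimpleGraph.dist_comm]; exact hchain.2.2.1)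
    | [], [b2], [] =>
      simp only [List.nil_append, List.cons_append, List.head?_cons] at hhead hlast hchain
      rw [List.chain'_cons, List.chain'_cons, List.chain'_cons] at hchain
      obtain rfl : a1 = z := by simpa using hhead
      exact hnear b1 (hPB b1 (by simp)) hchain.1
    | [], [], [c2] =>
      simp only [List.nil_append, List.cons_append, List.head?_cons] at hhead hlast hchain
      rw [List.chain'_cons, List.chain'_cons, List.chain'_cons] at hchain
      obtain rfl : a1 = z := by simpa using hhead
      exact hnear b1 (hPB b1 (by simp)) hchain.1
    | a2 :: a3 :: A2, _, _ => simp at hlen <;> omega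
    | _, b2 :: b3 :: B2, _ => simp at hlen <;> omega
    | _, _, c2 :: c3 :: C2 => simp at hlen <;> omega
    | [a2], [b2], _ => simp at hlen <;> omega
    | [a2], _, [c2] => simp at hlen <;> omega
    | _, [b2], [c2] => simp at hlen <;> omega
  | step l l' hred htr ih =>
    cases hred with
    | mk l₁ a b c l₂ hac =>
      intro A B C heq hA hB hC hPA hPB hPC hhead hlast hchain
      have hhead' : (l₁ ++ a :: c :: l₂).head? = some z := (head?_del l₁ l₂ a b c) ▸ hhead
      have hlast' : (l₁ ++ a :: c :: l₂).getLast? = some z := (getLast?_del l₁ l₂ a b c) ▸ hlast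
      have hchain' := chain'_del hchain hac
      obtain ⟨dab, dbc⟩ := chain'_del_facts hchain
      rw [List.append_assoc] at heq
      rcases List.append_eq_append_iff.mp heq.symm with ⟨s, hl₁s, hs⟩ | ⟨s, hAs, hs⟩
      · -- l₁ = A ++ s, B ++ C = s ++ (a :: b :: c :: l₂)
        rcases List.append_eq_append_iff.mp hs with ⟨t, hst, ht⟩ | ⟨t, hBt, ht⟩
        · -- s = B ++ t, C = t ++ a :: b :: c :: l₂ ; delete b from C
          refine ih A B (t ++ a :: c :: l₂) ?_ hA hB (by simp)
            hPA hPB (fun x hx => hPC x (by rw [ht]; simp at hx ⊢; tauto))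
            hhead' hlast' hchain'
          rw [hl₁s, hst]; simp
        · -- B = s ++ t, a :: b :: c :: l₂ = t ++ C
          match t, ht with
          | [], ht =>
            -- C = a :: b :: c :: l₂ ; delete b from C
            simp only [List.nil_append] at ht
            refine ih A B (a :: c :: l₂) ?_ hA hB (by simp)
              hPA hPB (fun x hx => hPC x (by rw [← ht]; simp at hx ⊢; tauto))
              hhead' hlast' hchain'
            rw [hl₁s, hBt]; simp
          | [a'], ht =>
            rw [List.cons_append, List.cons.injEq] at ht
            obtain ⟨rfl, ht2⟩ := ht
            simp only [List.nil_append] at ht2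
            -- B = s ++ [a], C = b :: c :: l₂ ; delete b from C
            refine ih A B (c :: l₂) ?_ hA hB (by simp)
              hPA hPB (fun x hx => hPC x (by rw [← ht2]; simp at hx ⊢; tauto))
              hhead' hlast' hchain'
            rw [hl₁s, hBt]; simp
          | [a', b'], ht =>
            rw [List.cons_append, List.cons_append, List.cons.injEq] at ht
            obtain ⟨rfl, ht2⟩ := ht
            rw [List.cons.injEq] at ht2
            obtain ⟨rfl, ht3⟩ := ht2
            simp only [List.nil_append] at ht3
            -- B = s ++ [a, b], C = c :: l₂ ; delete b from B
            refine ih A (s ++ [a]) C ?_ hA (by simp) hC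
              hPA (fun x hx => hPB x (by rw [hBt]; simp at hx ⊢; tauto)) hPC
              hhead' hlast' hchain'
            rw [hl₁s, ← ht3]; simp
          | a' :: b' :: c' :: t2, ht =>
            rw [List.cons_append, List.cons_append, List.cons_append, List.cons.injEq] at ht
            obtain ⟨rfl, ht2⟩ := ht
            rw [List.cons.injEq] at ht2
            obtain ⟨rfl, ht3⟩ := ht2
            rw [List.cons.injEq] at ht3
            obtain ⟨rfl, ht4⟩ := ht3
            -- B = s ++ a :: b :: c :: t2, l₂ = t2 ++ C ; delete b from B
            refine ih A (s ++ a :: c :: t2) C ?_ hA (by simp) hC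
              hPA (fun x hx => hPB x (by rw [hBt]; simp at hx ⊢; tauto)) hPC
              hhead' hlast' hchain'
            rw [hl₁s, ht4]; simp
      · -- A = l₁ ++ s, a :: b :: c :: l₂ = s ++ (B ++ C)
        match s, hs with
        | [], hs =>
          -- A = l₁, B ++ C = a :: b :: c :: l₂
          simp only [List.nil_append] at hs
          obtain ⟨B2, rfl⟩ : ∃ B2, B = a :: B2 := by
            obtain ⟨b1, B1, rfl⟩ := List.exists_cons_of_ne_nil hB
            rw [List.cons_append] at hs
            rw [List.cons.injEq] at hs
            exact ⟨B1, by rw [hs.1]⟩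
          rw [List.cons_append, List.cons.injEq] at hs
          match B2, hs.2 with
          | [], hs2 =>
            -- C = b :: c :: l₂ ; delete b from C
            simp only [List.nil_append] at hs2
            refine ih A [a] (c :: l₂) ?_ hA (by simp) (by simp)
              hPA (fun x hx => hPB x (by simp at hx; simp [hx]))
              (fun x hx => hPC x (by rw [← hs2]; simp at hx ⊢; tauto))
              hhead' hlast' hchain'
            rw [hAs]; simp
          | b' :: B3, hs2 =>
            rw [List.cons_append, List.cons.injEq] at hs2
            obtain ⟨rfl, hs3⟩ := hs2
            match B3, hs3 with
            | [], hs3 =>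
              -- B = [a, b], C = c :: l₂ ; delete b from B
              simp only [List.nil_append] at hs3
              refine ih A [a] C ?_ hA (by simp) hC
                hPA (fun x hx => hPB x (by simp at hx; simp [hx])) hPC hhead' hlast' hchain'
              rw [hAs, ← hs3]; simp
            | c' :: B4, hs3 =>
              rw [List.cons_append, List.cons.injEq] at hs3
              obtain ⟨rfl, hs4⟩ := hs3
              -- B = a :: b :: c :: B4, l₂ = B4 ++ C ; delete b from B
              refine ih A (a :: c :: B4) C ?_ hA (by simp) hC
                hPA (fun x hx => hPB x (by simp at hx ⊢; tauto)) hPC hhead' hlast' hchain'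
              rw [hAs, hs4]; simp
        | a' :: s1, hs =>
          rw [List.cons_append, List.cons.injEq] at hs
          obtain ⟨rfl, hs2⟩ := hs
          match s1, hs2 with
          | [], hs2 =>
            -- A = l₁ ++ [a], B ++ C = b :: c :: l₂
            simp only [List.nil_append] at hs2
            obtain ⟨B2, rfl⟩ : ∃ B2, B = b :: B2 := by
              obtain ⟨b1, B1, rfl⟩ := List.exists_cons_of_ne_nil hB
              rw [List.cons_append, List.cons.injEq] at hs2
              exact ⟨B1, by rw [hs2.1]⟩
            rw [List.cons_append, List.cons.injEq] at hs2
            match B2, hs2.2 with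
            | [], hs3 =>
              -- TRIPOD: A = l₁ ++ [a], B = [b], C = c :: l₂
              simp only [List.nil_append] at hs3
              exact htripod a b c (hPA a (by rw [hAs]; simp)) (hPB b (by simp))
                (hPC c (by rw [← hs3]; simp)) dab dbc hac
            | c' :: B3, hs3 =>
              rw [List.cons_append, List.cons.injEq] at hs3
              obtain ⟨rfl, hs4⟩ := hs3
              -- B = b :: c :: B3, l₂ = B3 ++ C ; delete b from B
              refine ih A (c :: B3) C ?_ hA (by simp) hC
                hPA (fun x hx => hPB x (by simp at hx ⊢; tauto)) hPC hhead' hlast' hchain'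
              rw [hAs, hs4]; simp
          | b'' :: s2, hs2 =>
            rw [List.cons_append, List.cons.injEq] at hs2
            obtain ⟨rfl, hs3⟩ := hs2
            -- A = l₁ ++ a :: b :: s2, c :: l₂ = s2 ++ (B ++ C) ; delete b from A
            refine ih (l₁ ++ a :: s2) B C ?_ (by simp) hB hC
              (fun x hx => hPA x (by rw [hAs]; simp at hx ⊢; tauto)) hPB hPC
              hhead' hlast' hchain'
            simp only [List.append_assoc, List.cons_append]
            rw [← hs3]

private lemma geodesic_point {V : Type*} {G : SimpleGraph V} (hG : G.Connected)
    {s t : V} (w : G.Walk s t) (hw : w.length = G.dist s t) {x : V} (hx : x ∈ w.support) :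
    G.dist s x + G.dist x t = G.dist s t := by
  classical
  have h1 : G.dist s x ≤ (w.takeUntil x hx).length := SimpleGraph.dist_le _
  have h2 : G.dist x t ≤ (w.dropUntil x hx).length := SimpleGraph.dist_le _
  have h3 : (w.takeUntil x hx).length + (w.dropUntil x hx).length = w.length := by
    conv_rhs => rw [← w.take_spec hx]
    rw [SimpleGraph.Walk.length_append]
  have h4 : G.dist s t ≤ G.dist s x + G.dist x t := hG.dist_triangle
  omega

/-- If every 1-sequence in a connected graph is `m`-triangulable (`m > 1`), then for all
vertices `u, v, z` and every path `p` from `u` to `v`,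
`dist(z, p) ≤ (1/2)(dist(z,u) + dist(z,v) − dist(u,v) + 3m)`
(stated without subtraction and division as
`2·dist(z,x) + dist(u,v) ≤ dist(z,u) + dist(z,v) + 3m` for some `x` on `p`). -/
theorem triangulable_imp_path_ineq {V : Type*} (G : SimpleGraph V) (hG : G.Connected)
    (m : ℕ) (hm : 1 < m)
    (htri : ∀ l : List V, IsMSeq G 1 l → Triangulable G m l) :
    ∀ (u v z : V) (p : G.Walk u v), ∃ x ∈ p.support,
      2 * G.dist z x + G.dist u v ≤ G.dist z u + G.dist z v + 3 * m := by
  intro u v z p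
  by_cases hzu : z = u
  · refine ⟨u, p.start_mem_support, ?_⟩
    subst hzu
    have h0 : G.dist z z = 0 := SimpleGraph.dist_self
    rw [h0]
    omega
  by_cases hzv : z = v
  · refine ⟨v, p.end_mem_support, ?_⟩
    subst hzv
    have h0 : G.dist z z = 0 := SimpleGraph.dist_self
    have hc : G.dist u z = G.dist z u := SimpleGraph.dist_comm
    rw [h0, hc]
    omega
  -- geodesics
  obtain ⟨gzu, hgzu⟩ := hG.exists_walk_length_eq_dist z u
  obtain ⟨gvz, hgvz⟩ := hG.exists_walk_length_eq_dist v z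
  set W : G.Walk z z := gzu.append (p.append gvz) with hW
  -- decomposition
  set A : List V := gzu.support.dropLast with hA
  set B : List V := p.support with hB
  set C : List V := gvz.support.tail with hC
  have hgzu_supp : gzu.support = A ++ [u] := by
    have h1 : gzu.support.reverse = u :: gzu.support.reverse.tail := by
      rw [← SimpleGraph.Walk.support_reverse]
      exact SimpleGraph.Walk.support_eq_cons _
    have h2 := congrArg List.reverse h1
    rw [List.reverse_reverse, List.reverse_cons] at h2
    rw [hA, h2]
    simp
  have hsupp : W.support = A ++ B ++ C := by
    rw [hW, SimpleGraph.Walk.support_append, SimpleGraph.Walk.support_append,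
      List.tail_append_of_ne_nil (p.support_ne_nil), hgzu_supp, hB, hC]
    conv_rhs => rw [SimpleGraph.Walk.support_eq_cons p]
    simp
    rw [← List.cons_append, SimpleGraph.Walk.cons_tail_support]
  have hhead : W.support.head? = some z := by
    rw [SimpleGraph.Walk.support_eq_cons]; rfl
  have hlast : W.support.getLast? = some z := by
    rw [← List.head?_reverse, ← SimpleGraph.Walk.support_reverse,
      SimpleGraph.Walk.support_eq_cons]
    rfl
  have hchain1 : W.support.Chain' (fun x y => G.dist x y ≤ 1) := by
    refine (SimpleGraph.Walk.isChain_adj_support W).imp ?_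
    intro x y hxy
    have := SimpleGraph.dist_le (SimpleGraph.Walk.cons hxy SimpleGraph.Walk.nil)
    simpa using this
  have htriang : Triangulable G m W.support :=
    htri W.support ⟨W.support_ne_nil, by rw [hhead, hlast], hchain1⟩
  -- lengths
  have hAlen : A ≠ [] := by
    rw [hA]
    intro h
    have h1 := congrArg List.length h
    rw [List.length_dropLast, SimpleGraph.Walk.length_support] at h1
    simp only [List.length_nil] at h1
    have h2 : gzu.length ≠ 0 := by
      rw [hgzu]
      exact fun h0 => hzu (hG.dist_eq_zero_iff.mp h0)
    omega
  have hClen : C ≠ [] := by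
    rw [hC]
    intro h
    have h1 := congrArg List.length h
    rw [List.length_tail, SimpleGraph.Walk.length_support] at h1
    simp only [List.length_nil] at h1
    have h2 : gvz.length ≠ 0 := by
      rw [hgvz]
      exact fun h0 => hzv (hG.dist_eq_zero_iff.mp h0).symm
    omega
  refine main_ind G m
    (fun x => G.dist z x + G.dist x u = G.dist z u)
    (fun x => x ∈ p.support)
    (fun x => G.dist v x + G.dist x z = G.dist v z)
    _ z ?_ ?_ W.support htriang A B C hsupp hAlen (p.support_ne_nil) hClen
    ?_ (fun x hx => hx) ?_ hhead hlast (hchain1.imp (fun {x y} h => le_trans h hm.le))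
  · -- tripod
    intro a b c hPAa hPBb hPCc dab dbc dac
    refine ⟨b, hPBb, ?_⟩
    have t1 : G.dist z b ≤ G.dist z a + G.dist a b := hG.dist_triangle
    have t2 : G.dist z b ≤ G.dist z c + G.dist c b := hG.dist_triangle
    have t3 : G.dist u v ≤ G.dist u a + G.dist a v := hG.dist_triangle
    have t4 : G.dist a v ≤ G.dist a c + G.dist c v := hG.dist_triangle
    have c1 : G.dist z c = G.dist c z := SimpleGraph.dist_comm ..
    have c2 : G.dist c b = G.dist b c := SimpleGraph.dist_comm ..
    have c3 : G.dist u a = G.dist a u := SimpleGraph.dist_comm ..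
    have c4 : G.dist c v = G.dist v c := SimpleGraph.dist_comm ..
    have c5 : G.dist v z = G.dist z v := SimpleGraph.dist_comm ..
    omega
  · -- near z
    intro b hPBb hzb
    refine ⟨b, hPBb, ?_⟩
    have t1 : G.dist u v ≤ G.dist u z + G.dist z v := hG.dist_triangle
    have c1 : G.dist u z = G.dist z u := SimpleGraph.dist_comm ..
    omega
  · -- PA on A
    intro x hx
    exact geodesic_point hG gzu hgzu (by rw [hgzu_supp]; exact List.mem_append_left _ hx)
  · -- PC on C
    intro x hx
    exact geodesic_point hG gvz hgvz (List.mem_of_mem_tail hx)
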